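/- Let Y be a random variable on [0,1] and define g^h recursively by g¹(y) = y − E[Y], g^{h+1}(y) = y·g^h(y) − E[Y·g^h(Y)]. Then for every odd index h = 2l+1 with l ≥ 1, E[Y·g^{2l+1}(Y)] = E[(Y·g^l(Y))²] − (E[Y·g^l(Y)])² ≥ 0. -/

import Mathlib

open MeasureTheory

theorem stmt3 (ρ : Measure ℝ) [IsProbabilityMeasure ρ]
    (hsupp : ∀ᵐ y ∂ρ, y ∈ Set.Icc (0:ℝ) 1)
    (g : ℕ → ℝ → ℝ)
    (hg1 : ∀ y, g 1 y = y - ∫ z, z ∂ρ)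
    (hrec : ∀ h : ℕ, 1 ≤ h → ∀ y, g (h+1) y = y * g h y - ∫ z, z * g h z ∂ρ)
    (l : ℕ) (hl : 1 ≤ l) :
    (∫ y, y * g (2*l+1) y ∂ρ
        = (∫ y, (y * g l y)^2 ∂ρ) - (∫ y, y * g l y ∂ρ)^2) ∧
      0 ≤ ∫ y, y * g (2*l+1) y ∂ρ := by
  -- continuity of g h for h ≥ 1
  have hcont : ∀ h, 1 ≤ h → Continuous (g h) := by
    intro h
    induction h with
    | zero => intro hh; omega
    | succ n ih =>
      intro _
      rcases Nat.eq_zero_or_pos n with h0 | h0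
      · subst h0
        have : g 1 = fun y => y - ∫ z, z ∂ρ := funext hg1
        rw [this]
        exact continuous_id.sub continuous_const
      · have : g (n+1) = fun y => y * g n y - ∫ z, z * g n z ∂ρ :=
          funext (hrec n h0)
        rw [this]
        exact (continuous_id.mul (ih h0)).sub continuous_const
  have hres : ρ.restrict (Set.Icc (0:ℝ) 1) = ρ :=
    Measure.restrict_eq_self_of_ae_mem hsupp
  have hint : ∀ f : ℝ → ℝ, Continuous f → Integrable f ρ := by
    intro f hf
    rw [← hres]
    exact hf.continuousOn.integrableOn_compact isCompact_Icc
  -- the shift identity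
  have hshift : ∀ h, 1 ≤ h → ∀ φ : ℝ → ℝ, Continuous φ →
      ∫ y, y * g (h+1) y * φ y ∂ρ
        = (∫ y, y^2 * g h y * φ y ∂ρ) - (∫ z, z * g h z ∂ρ) * ∫ y, y * φ y ∂ρ := by
    intro h hh φ hφ
    have hgh := hcont h hh
    have h1 : (fun y => y * g (h+1) y * φ y)
        = fun y => y^2 * g h y * φ y - (∫ z, z * g h z ∂ρ) * (y * φ y) := by
      funext y; rw [hrec h hh]; ring
    have hI1 : Integrable (fun y => y^2 * g h y * φ y) ρ :=
      hint _ (((continuous_pow 2).mul hgh).mul hφ)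
    have hI2 : Integrable (fun y => (∫ z, z * g h z ∂ρ) * (y * φ y)) ρ :=
      (hint _ (continuous_id'.mul hφ)).const_mul _
    rw [h1, integral_sub hI1 hI2, integral_const_mul]
  have hA : ∀ h k, 1 ≤ h → 1 ≤ k →
      ∫ y, y * g (h+1) y * g k y ∂ρ = ∫ y, y * g h y * g (k+1) y ∂ρ := by
    intro h k hh hk
    rw [hshift h hh _ (hcont k hk)]
    have hcomm : ∀ y, y * g h y * g (k+1) y = y * g (k+1) y * g h y := fun y => by ring
    simp_rw [hcomm]
    rw [hshift k hk _ (hcont h hh)]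
    have hc2 : ∀ y, y^2 * g k y * g h y = y^2 * g h y * g k y := fun y => by ring
    simp_rw [hc2]
    ring
  -- chain from (l+1+d, l-d) to (l+1, l)
  have hchain : ∀ d, d ≤ l - 1 →
      ∫ y, y * g (l+1+d) y * g (l-d) y ∂ρ = ∫ y, y * g (l+1) y * g l y ∂ρ := by
    intro d
    induction d with
    | zero => intro _; simp
    | succ n ih =>
      intro hd
      have hn : n ≤ l - 1 := by omega
      have e1 : l - n = (l - (n+1)) + 1 := by omega
      have e2 : l + 1 + (n+1) = (l + 1 + n) + 1 := by omega
      have hk : 1 ≤ l - (n+1) := by omega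
      have hh : 1 ≤ l + 1 + n := by omega
      rw [e2, hA (l+1+n) (l-(n+1)) hh hk, ← e1, ih hn]
  -- top step: E[Y g^{2l+1}] = I(2l, 1)
  have htop : ∫ y, y * g (2*l+1) y ∂ρ = ∫ y, y * g (2*l) y * g 1 y ∂ρ := by
    have h2l : 1 ≤ 2*l := by omega
    have e1 : (fun y => y * g (2*l+1) y) = fun y => y * g (2*l+1) y * (fun _ => (1:ℝ)) y := by
      funext y; simp
    rw [e1, hshift (2*l) h2l _ continuous_const]
    have e2 : ∀ y, y * g (2*l) y * g 1 y
        = y^2 * g (2*l) y * (1:ℝ) - (∫ z, z ∂ρ) * (y * g (2*l) y) := by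
      intro y; rw [hg1]; ring
    have hI1 : Integrable (fun y => y^2 * g (2*l) y * 1) ρ := by
      have := hint _ ((continuous_pow 2).mul (hcont _ h2l))
      simp only [mul_one]; exact this
    have hI2 : Integrable (fun y => (∫ z, z ∂ρ) * (y * g (2*l) y)) ρ :=
      (hint _ (continuous_id'.mul (hcont _ h2l))).const_mul _
    simp_rw [e2]
    rw [integral_sub hI1 hI2, integral_const_mul]
    simp [mul_comm]
  -- bottom step: I(l+1, l) = E[(Y g^l)^2] - (E[Y g^l])^2
  have hbot : ∫ y, y * g (l+1) y * g l y ∂ρ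
      = (∫ y, (y * g l y)^2 ∂ρ) - (∫ y, y * g l y ∂ρ)^2 := by
    rw [hshift l hl _ (hcont l hl)]
    have e : ∀ y, y^2 * g l y * g l y = (y * g l y)^2 := fun y => by ring
    simp_rw [e]
    ring
  -- combine the chain
  have hmain : ∫ y, y * g (2*l+1) y ∂ρ
      = (∫ y, (y * g l y)^2 ∂ρ) - (∫ y, y * g l y ∂ρ)^2 := by
    have hd := hchain (l-1) le_rfl
    have e1 : l + 1 + (l - 1) = 2*l := by omega
    have e2 : l - (l-1) = 1 := by omega
    rw [e1, e2] at hd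
    rw [htop, hd, hbot]
  refine ⟨hmain, ?_⟩
  -- nonnegativity: it is a variance
  rw [hmain]
  set c := ∫ y, y * g l y ∂ρ with hc
  have hfl : Continuous fun y => y * g l y := continuous_id.mul (hcont l hl)
  have hvar : ∫ y, (y * g l y - c)^2 ∂ρ
      = (∫ y, (y * g l y)^2 ∂ρ) - c^2 := by
    have e : ∀ y : ℝ, (y * g l y - c)^2
        = (y * g l y)^2 - (2*c) * (y * g l y) + c^2 := fun y => by ring
    have hI1 : Integrable (fun y => (y * g l y)^2) ρ := hint _ (hfl.pow 2)
    have hI2 : Integrable (fun y => 2 * c * (y * g l y)) ρ := (hint _ hfl).const_mul _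
    simp_rw [e]
    have hI3 : Integrable (fun y => (y * g l y)^2 - 2 * c * (y * g l y)) ρ := hI1.sub hI2
    rw [integral_add hI3 (integrable_const _),
      integral_sub hI1 hI2, integral_const_mul, integral_const]
    simp
    ring
  rw [← hvar]
  exact integral_nonneg fun y => sq_nonneg _
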